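/- arXiv:1201.0891 — 3 statements merged into one kernel-verified Lean document; each statement's English description precedes it below -/
import Mathlib

section
/- For every positive semidefinite d×d matrix ρ with tr(ρ) ≤ 1 and every n ≥ 0, H_R̄_{n+1}(ρ) = H_R̄_n(ρ) ⊔ T(H_R̄_n(ρ)), where for a subspace X of ℂ^d the image T(X) is defined as the join ⋁_{i=1}^m ⋁_j (E_{i,j} M_1)(X) of the images of X under the linear maps E_{i,j} M_1. -/
noncomputable section
open Matrix
open scoped ComplexOrder

variable {d m r : ℕ}

/-- One step of process `i`: `T_i(ρ) = E_i(M₁ ρ M₁†) = ∑_j (E_{i,j} M₁) ρ (E_{i,j} M₁)†`. -/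
def Tstep (E : Fin m → Fin r → Matrix (Fin d) (Fin d) ℂ)
    (M1 : Matrix (Fin d) (Fin d) ℂ) (i : Fin m)
    (ρ : Matrix (Fin d) (Fin d) ℂ) : Matrix (Fin d) (Fin d) ℂ :=
  ∑ j, (E i j * M1) * ρ * (E i j * M1)ᴴ

/-- `T_f` for a word `f = s₁⋯s_n`: apply `T_{s₁}` first, then `T_{s₂}`, …, `T_{s_n}`. -/
def Tword (E : Fin m → Fin r → Matrix (Fin d) (Fin d) ℂ)
    (M1 : Matrix (Fin d) (Fin d) ℂ) (f : List (Fin m))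
    (ρ : Matrix (Fin d) (Fin d) ℂ) : Matrix (Fin d) (Fin d) ℂ :=
  f.foldl (fun σ k => Tstep E M1 k σ) ρ

/-- The support of a matrix: its column space, as a subspace of `ℂ^d`. -/
def supp (A : Matrix (Fin d) (Fin d) ℂ) : Submodule ℂ (Fin d → ℂ) :=
  LinearMap.range (Matrix.toLin' A)

/-- Length-`n` prefix of a schedule. -/
def prefixn (s : ℕ → Fin m) (n : ℕ) : List (Fin m) :=
  List.ofFn (fun i : Fin n => s i)

/-- Termination probability within a word `f`. -/
def tWord (E : Fin m → Fin r → Matrix (Fin d) (Fin d) ℂ)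
    (M0 M1 : Matrix (Fin d) (Fin d) ℂ) (f : List (Fin m))
    (ρ : Matrix (Fin d) (Fin d) ℂ) : ℝ :=
  ∑ n ∈ Finset.range (f.length + 1),
    (M0 * Tword E M1 (f.take n) ρ * M0ᴴ).trace.re

/-- Termination probability along a schedule `s`. -/
def tSched (E : Fin m → Fin r → Matrix (Fin d) (Fin d) ℂ)
    (M0 M1 : Matrix (Fin d) (Fin d) ℂ) (s : ℕ → Fin m)
    (ρ : Matrix (Fin d) (Fin d) ℂ) : ℝ :=
  ∑' n : ℕ, (M0 * Tword E M1 (prefixn s n) ρ * M0ᴴ).trace.re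

/-- Termination probability `t(ρ)`: infimum over all schedules. -/
def tInf (E : Fin m → Fin r → Matrix (Fin d) (Fin d) ℂ)
    (M0 M1 : Matrix (Fin d) (Fin d) ℂ)
    (ρ : Matrix (Fin d) (Fin d) ℂ) : ℝ :=
  ⨅ s : ℕ → Fin m, tSched E M0 M1 s ρ

/-- The reachable space `H_{R(ρ)}`. -/
def HR (E : Fin m → Fin r → Matrix (Fin d) (Fin d) ℂ)
    (M1 : Matrix (Fin d) (Fin d) ℂ)
    (ρ : Matrix (Fin d) (Fin d) ℂ) : Submodule ℂ (Fin d → ℂ) :=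
  ⨆ f : List (Fin m), supp (Tword E M1 f ρ)

/-- The average super-operator `T = (1/m) ∑ T_i`. -/
def Tavg (E : Fin m → Fin r → Matrix (Fin d) (Fin d) ℂ)
    (M1 : Matrix (Fin d) (Fin d) ℂ)
    (ρ : Matrix (Fin d) (Fin d) ℂ) : Matrix (Fin d) (Fin d) ℂ :=
  ((m : ℂ)⁻¹) • ∑ i : Fin m, Tstep E M1 i ρ

/-- `H_{R̄_n(ρ)} = ⋁_{k=0}^n supp(T^k(ρ))`. -/
def HRbar (E : Fin m → Fin r → Matrix (Fin d) (Fin d) ℂ)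
    (M1 : Matrix (Fin d) (Fin d) ℂ)
    (ρ : Matrix (Fin d) (Fin d) ℂ) (n : ℕ) : Submodule ℂ (Fin d → ℂ) :=
  ⨆ k : Fin (n + 1), supp ((Tavg E M1)^[k] ρ)

/-- Reachable termination probability `h(ρ)`. -/
def hProb (E : Fin m → Fin r → Matrix (Fin d) (Fin d) ℂ)
    (M0 M1 : Matrix (Fin d) (Fin d) ℂ)
    (ρ : Matrix (Fin d) (Fin d) ℂ) : ℝ :=
  sInf { x : ℝ | ∃ σ : Matrix (Fin d) (Fin d) ℂ,
    σ.PosSemidef ∧ σ.trace = 1 ∧ supp σ ≤ HR E M1 ρ ∧ x = tInf E M0 M1 σ }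

/-- `PD_f`: pure states diverging within the word `f`. -/
def PDword (E : Fin m → Fin r → Matrix (Fin d) (Fin d) ℂ)
    (M0 M1 : Matrix (Fin d) (Fin d) ℂ) (f : List (Fin m)) : Set (Fin d → ℂ) :=
  { x : Fin d → ℂ | tWord E M0 M1 f (Matrix.vecMulVec x (star x)) = 0 }

/-- `PD_n`: union of `PD_f` over words of length `n`. -/
def PDn (E : Fin m → Fin r → Matrix (Fin d) (Fin d) ℂ)
    (M0 M1 : Matrix (Fin d) (Fin d) ℂ) (n : ℕ) : Set (Fin d → ℂ) :=
  { x : Fin d → ℂ | ∃ f : List (Fin m), f.length = n ∧ x ∈ PDword E M0 M1 f }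

/-- `PD`: the diverging pure states. -/
def PD (E : Fin m → Fin r → Matrix (Fin d) (Fin d) ℂ)
    (M0 M1 : Matrix (Fin d) (Fin d) ℂ) : Set (Fin d → ℂ) :=
  { x : Fin d → ℂ | ∃ s : ℕ → Fin m, tSched E M0 M1 s (Matrix.vecMulVec x (star x)) = 0 }

lemma toLin'_eq_mulVecLin (A : Matrix (Fin d) (Fin d) ℂ) :
    Matrix.toLin' A = A.mulVecLin :=
  LinearMap.ext fun v => by rw [Matrix.toLin'_apply, Matrix.mulVecLin_apply]

lemma range_mulVecLin_self_mul_conjTranspose {ι : Type*} [Fintype ι] [DecidableEq ι]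
    (M : Matrix (Fin d) ι ℂ) :
    LinearMap.range (M * Mᴴ).mulVecLin = LinearMap.range M.mulVecLin := by
  have h1 : LinearMap.range (M * Mᴴ).mulVecLin ≤ LinearMap.range M.mulVecLin := by
    rw [Matrix.mulVecLin_mul]
    exact LinearMap.range_comp_le_range _ _
  exact Submodule.eq_of_le_of_finrank_le h1
    (le_of_eq (Matrix.rank_self_mul_conjTranspose M).symm)

lemma supp_eq_range (A : Matrix (Fin d) (Fin d) ℂ) :
    supp A = LinearMap.range A.mulVecLin := by
  rw [supp, toLin'_eq_mulVecLin]

lemma supp_sum_mul_mul_conjTranspose {ι : Type*} [Fintype ι] [DecidableEq ι]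
    (A : ι → Matrix (Fin d) (Fin d) ℂ) {ρ : Matrix (Fin d) (Fin d) ℂ}
    (hρ : ρ.PosSemidef) :
    supp (∑ k, A k * ρ * (A k)ᴴ) =
      ⨆ k, Submodule.map (Matrix.toLin' (A k)) (supp ρ) := by
  classical
  obtain ⟨S, hS⟩ : ∃ S : Matrix (Fin d) (Fin d) ℂ, S * Sᴴ = ρ := by
    open scoped MatrixOrder in
    obtain ⟨y, hy⟩ := CStarAlgebra.nonneg_iff_eq_star_mul_self.mp hρ.nonneg
    refine ⟨yᴴ, ?_⟩
    rw [Matrix.conjTranspose_conjTranspose, hy]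
    rfl
  set C : Matrix (Fin d) ((ι × Fin d)) ℂ :=
    Matrix.of (fun x p => (A p.1 * S) x p.2) with hCdef
  have hCC : C * Cᴴ = ∑ k, (A k * S) * (A k * S)ᴴ := by
    ext x y
    simp only [hCdef, Matrix.mul_apply, Matrix.conjTranspose_apply, Matrix.sum_apply,
      Fintype.sum_prod_type, Matrix.of_apply]
  have hrange : LinearMap.range C.mulVecLin
      = ⨆ k, LinearMap.range (A k * S).mulVecLin := by
    apply le_antisymm
    · rintro _ ⟨v, rfl⟩
      have hdec : C.mulVecLin v = ∑ k, (A k * S).mulVecLin (fun z => v (k, z)) := by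
        ext x
        simp [hCdef, Matrix.mulVecLin_apply, Matrix.mulVec, dotProduct,
          Fintype.sum_prod_type, Finset.sum_apply]
      rw [hdec]
      exact Submodule.sum_mem _ fun k _ => Submodule.mem_iSup_of_mem k ⟨_, rfl⟩
    · refine iSup_le fun k => ?_
      rintro _ ⟨w, rfl⟩
      refine ⟨fun p => if p.1 = k then w p.2 else 0, ?_⟩
      ext x
      simp only [hCdef, Matrix.mulVecLin_apply, Matrix.mulVec, dotProduct,
        Fintype.sum_prod_type, Matrix.of_apply, mul_ite, mul_zero, Finset.sum_ite_eq,
        Finset.mem_univ, if_true]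
      simp [Matrix.mul_apply, Finset.sum_mul, mul_assoc]
  have hterm : ∀ k, A k * ρ * (A k)ᴴ = (A k * S) * (A k * S)ᴴ := by
    intro k
    rw [← hS]
    simp [Matrix.conjTranspose_mul, Matrix.mul_assoc]
  calc supp (∑ k, A k * ρ * (A k)ᴴ)
      = LinearMap.range (C * Cᴴ).mulVecLin := by
        rw [supp_eq_range, hCC]
        exact congrArg _ (congrArg _ (Finset.sum_congr rfl fun k _ => hterm k))
    _ = LinearMap.range C.mulVecLin := range_mulVecLin_self_mul_conjTranspose C
    _ = ⨆ k, LinearMap.range (A k * S).mulVecLin := hrange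
    _ = ⨆ k, Submodule.map (Matrix.toLin' (A k)) (supp ρ) := by
        refine iSup_congr fun k => ?_
        rw [Matrix.mulVecLin_mul, LinearMap.range_comp, toLin'_eq_mulVecLin,
          supp_eq_range, ← hS, range_mulVecLin_self_mul_conjTranspose]

lemma supp_smul_ne_zero {c : ℂ} (hc : c ≠ 0) (A : Matrix (Fin d) (Fin d) ℂ) :
    supp (c • A) = supp A := by
  rw [supp_eq_range, supp_eq_range]
  apply le_antisymm
  · rintro _ ⟨v, rfl⟩
    refine ⟨c • v, ?_⟩
    simp [Matrix.mulVecLin_apply, Matrix.mulVec_smul, Matrix.smul_mulVec]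
  · rintro _ ⟨v, rfl⟩
    refine ⟨c⁻¹ • v, ?_⟩
    simp [Matrix.mulVecLin_apply, Matrix.mulVec_smul, Matrix.smul_mulVec,
      smul_smul, mul_inv_cancel₀ hc, inv_mul_cancel₀ hc]

lemma posSemidef_add' {A B : Matrix (Fin d) (Fin d) ℂ}
    (hA : A.PosSemidef) (hB : B.PosSemidef) : (A + B).PosSemidef := by
  refine ⟨?_, fun x => ?_⟩
  · show (A + B)ᴴ = A + B
    rw [Matrix.conjTranspose_add, hA.1, hB.1]
  · exact (hA.add hB).2 x

lemma posSemidef_sum' {ι : Type*} (s : Finset ι) (f : ι → Matrix (Fin d) (Fin d) ℂ)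
    (hf : ∀ i ∈ s, (f i).PosSemidef) : (∑ i ∈ s, f i).PosSemidef := by
  classical
  induction s using Finset.induction_on with
  | empty => simpa using Matrix.PosSemidef.zero
  | insert a s hnotmem ih =>
    rw [Finset.sum_insert hnotmem]
    exact posSemidef_add' (hf _ (Finset.mem_insert_self _ _))
      (ih fun i hi => hf i (Finset.mem_insert_of_mem hi))

lemma posSemidef_real_smul {c : ℝ} (hc : 0 ≤ c) {A : Matrix (Fin d) (Fin d) ℂ}
    (hA : A.PosSemidef) : ((c : ℂ) • A).PosSemidef := by
  refine ⟨?_, fun x => ?_⟩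
  · show ((c : ℂ) • A)ᴴ = (c : ℂ) • A
    rw [Matrix.conjTranspose_smul, hA.1]
    congr 1
    simp [Complex.conj_ofReal]
  · have h1 : (0 : ℂ) ≤ (c : ℂ) := by
      rw [Complex.zero_le_real]; exact hc
    have h2 := hA.2 x
    have := mul_nonneg h1 h2
    exact (hA.smul h1).2 x

lemma posSemidef_Tavg (E : Fin m → Fin r → Matrix (Fin d) (Fin d) ℂ)
    (M1 : Matrix (Fin d) (Fin d) ℂ) {σ : Matrix (Fin d) (Fin d) ℂ}
    (hσ : σ.PosSemidef) : (Tavg E M1 σ).PosSemidef := by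
  have hnn : (0:ℝ) ≤ ((m : ℝ))⁻¹ := by positivity
  have hsum : (∑ i : Fin m, Tstep E M1 i σ).PosSemidef := by
    refine posSemidef_sum' _ _ fun i _ => ?_
    refine posSemidef_sum' _ _ fun j _ => ?_
    exact hσ.mul_mul_conjTranspose_same _
  rw [Tavg, show ((m:ℂ))⁻¹ = Complex.ofReal ((m:ℝ)⁻¹) by push_cast; ring]
  exact posSemidef_real_smul hnn hsum

lemma posSemidef_Tavg_iter (E : Fin m → Fin r → Matrix (Fin d) (Fin d) ℂ)
    (M1 : Matrix (Fin d) (Fin d) ℂ) {ρ : Matrix (Fin d) (Fin d) ℂ}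
    (hρ : ρ.PosSemidef) (k : ℕ) : ((Tavg E M1)^[k] ρ).PosSemidef := by
  induction k with
  | zero => simpa using hρ
  | succ k ih =>
    rw [Function.iterate_succ_apply']
    exact posSemidef_Tavg E M1 ih

lemma supp_Tavg (hm : 0 < m) (E : Fin m → Fin r → Matrix (Fin d) (Fin d) ℂ)
    (M1 : Matrix (Fin d) (Fin d) ℂ) {σ : Matrix (Fin d) (Fin d) ℂ}
    (hσ : σ.PosSemidef) :
    supp (Tavg E M1 σ) =
      ⨆ i : Fin m, ⨆ j : Fin r,
        Submodule.map (Matrix.toLin' (E i j * M1)) (supp σ) := by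
  classical
  have hmc : ((m : ℂ))⁻¹ ≠ 0 := by
    simp [hm.ne']
  have hsum : ∑ i : Fin m, Tstep E M1 i σ
      = ∑ p : Fin m × Fin r, (E p.1 p.2 * M1) * σ * (E p.1 p.2 * M1)ᴴ := by
    rw [Fintype.sum_prod_type]
    rfl
  rw [Tavg, supp_smul_ne_zero hmc, hsum, supp_sum_mul_mul_conjTranspose _ hσ, iSup_prod]

/-- `H_R̄_{n+1}(ρ) = H_R̄_n(ρ) ⊔ T(H_R̄_n(ρ))`, where the image of a subspace
`X` under `T` is the join of the images of `X` under the linear maps `E_{i,j} M₁`. -/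
theorem HRbar_succ (d m r : ℕ) (hd : 0 < d) (hm : 0 < m)
    (E : Fin m → Fin r → Matrix (Fin d) (Fin d) ℂ)
    (hE : ∀ i, ∑ j, (E i j)ᴴ * E i j = 1)
    (M0 M1 : Matrix (Fin d) (Fin d) ℂ)
    (hM : M0ᴴ * M0 + M1ᴴ * M1 = 1)
    (ρ : Matrix (Fin d) (Fin d) ℂ) (hρ : ρ.PosSemidef) (htr : ρ.trace ≤ 1) (n : ℕ) :
    HRbar E M1 ρ (n + 1) =
      HRbar E M1 ρ n ⊔
        ⨆ i : Fin m, ⨆ j : Fin r,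
          Submodule.map (Matrix.toLin' (E i j * M1)) (HRbar E M1 ρ n) := by
  classical
  set T := Tavg E M1 with hT
  have hPSD : ∀ k : ℕ, (T^[k] ρ).PosSemidef := posSemidef_Tavg_iter E M1 hρ
  have hstep : ∀ k : ℕ, supp (T^[k+1] ρ) =
      ⨆ i : Fin m, ⨆ j : Fin r,
        Submodule.map (Matrix.toLin' (E i j * M1)) (supp (T^[k] ρ)) := by
    intro k
    rw [Function.iterate_succ_apply', hT, supp_Tavg hm E M1 (hPSD k)]
  have hHn : HRbar E M1 ρ n = ⨆ k : Fin (n+1), supp (T^[(k:ℕ)] ρ) := rfl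
  have hHn1 : HRbar E M1 ρ (n+1) = ⨆ k : Fin (n+2), supp (T^[(k:ℕ)] ρ) := rfl
  rw [hHn, hHn1]
  apply le_antisymm
  · refine iSup_le fun k => ?_
    by_cases hk : (k : ℕ) ≤ n
    · exact le_trans (le_iSup (fun k : Fin (n+1) => supp (T^[(k:ℕ)] ρ)) ⟨k, by omega⟩)
        le_sup_left
    · have hk' : (k : ℕ) = n + 1 := by omega
      rw [hk', hstep n]
      refine le_trans ?_ le_sup_right
      refine iSup_mono fun i => iSup_mono fun j => Submodule.map_mono ?_
      exact le_iSup (fun k : Fin (n+1) => supp (T^[(k:ℕ)] ρ)) ⟨n, by omega⟩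
  · refine sup_le ?_ ?_
    · refine iSup_le fun k => ?_
      exact le_iSup (fun k : Fin (n+2) => supp (T^[(k:ℕ)] ρ)) ⟨k, by omega⟩
    · refine iSup_le fun i => iSup_le fun j => ?_
      rw [Submodule.map_iSup]
      refine iSup_le fun k => ?_
      have h1 : Submodule.map (Matrix.toLin' (E i j * M1)) (supp (T^[(k:ℕ)] ρ))
          ≤ supp (T^[(k:ℕ)+1] ρ) := by
        rw [hstep (k:ℕ)]
        exact le_iSup₂ (f := fun i j =>
          Submodule.map (Matrix.toLin' (E i j * M1)) (supp (T^[(k:ℕ)] ρ))) i j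
      exact h1.trans
        (le_iSup (fun k : Fin (n+2) => supp (T^[(k:ℕ)] ρ)) ⟨(k:ℕ)+1, by omega⟩)
end
end

section
/- A positive semidefinite d×d matrix ρ with tr(ρ) ≤ 1 satisfies t(ρ) = tr(ρ) if and only if t(T_f(ρ)) = tr(T_f(ρ)) for every word f over {1,…,m}. -/
noncomputable section
open Matrix
open scoped ComplexOrder

variable {d m r : ℕ}

lemma psd_trace_re_nonneg {A : Matrix (Fin d) (Fin d) ℂ} (h : A.PosSemidef) :
    0 ≤ A.trace.re := by
  have : 0 ≤ A.trace := by
    rw [Matrix.trace]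
    apply Finset.sum_nonneg
    intro i _
    have := h.dotProduct_mulVec_nonneg (Pi.single i 1)
    simpa [Matrix.mulVec_single, dotProduct, Pi.single_apply, Matrix.diag] using this
  exact_mod_cast (Complex.le_def.mp this).1

lemma Tstep_posSemidef (E : Fin m → Fin r → Matrix (Fin d) (Fin d) ℂ)
    (M1 : Matrix (Fin d) (Fin d) ℂ) (i : Fin m)
    {ρ : Matrix (Fin d) (Fin d) ℂ} (hρ : ρ.PosSemidef) :
    (Tstep E M1 i ρ).PosSemidef := by
  unfold Tstep
  have : ∀ j ∈ Finset.univ, ((E i j * M1) * ρ * (E i j * M1)ᴴ).PosSemidef :=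
    fun j _ => hρ.mul_mul_conjTranspose_same _
  exact Finset.sum_induction _ _ (fun a b ha hb => ha.add hb)
    (Matrix.PosSemidef.zero) this

lemma Tword_posSemidef (E : Fin m → Fin r → Matrix (Fin d) (Fin d) ℂ)
    (M1 : Matrix (Fin d) (Fin d) ℂ) (f : List (Fin m))
    {ρ : Matrix (Fin d) (Fin d) ℂ} (hρ : ρ.PosSemidef) :
    (Tword E M1 f ρ).PosSemidef := by
  induction f generalizing ρ with
  | nil => exact hρ
  | cons k f ih => exact ih (Tstep_posSemidef E M1 k hρ)

lemma trace_step (E : Fin m → Fin r → Matrix (Fin d) (Fin d) ℂ)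
    (hE : ∀ i, ∑ j, (E i j)ᴴ * E i j = 1)
    (M0 M1 : Matrix (Fin d) (Fin d) ℂ)
    (hM : M0ᴴ * M0 + M1ᴴ * M1 = 1) (i : Fin m)
    (σ : Matrix (Fin d) (Fin d) ℂ) :
    (M0 * σ * M0ᴴ).trace + (Tstep E M1 i σ).trace = σ.trace := by
  have h1 : (Tstep E M1 i σ).trace = (M1 * σ * M1ᴴ).trace := by
    unfold Tstep
    rw [Matrix.trace_sum]
    have : ∀ j, ((E i j * M1) * σ * (E i j * M1)ᴴ).trace
        = ((E i j)ᴴ * E i j * (M1 * σ * M1ᴴ)).trace := by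
      intro j
      rw [Matrix.conjTranspose_mul]
      rw [show E i j * M1 * σ * (M1ᴴ * (E i j)ᴴ) = E i j * (M1 * σ * M1ᴴ) * (E i j)ᴴ by
        noncomm_ring]
      rw [Matrix.trace_mul_cycle]
    simp_rw [this, ← Matrix.trace_sum, ← Finset.sum_mul, hE i, Matrix.one_mul]
  rw [h1, Matrix.trace_mul_cycle M0 σ M0ᴴ, Matrix.trace_mul_cycle M1 σ M1ᴴ,
      ← Matrix.trace_add, ← Matrix.add_mul, hM, Matrix.one_mul]

lemma prefixn_succ' (s : ℕ → Fin m) (n : ℕ) :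
    prefixn s (n + 1) = prefixn s n ++ [s n] := by
  unfold prefixn
  rw [List.ofFn_succ']
  simp [List.concat_eq_append]

lemma Tword_concat (E : Fin m → Fin r → Matrix (Fin d) (Fin d) ℂ)
    (M1 : Matrix (Fin d) (Fin d) ℂ) (f : List (Fin m)) (k : Fin m)
    (ρ : Matrix (Fin d) (Fin d) ℂ) :
    Tword E M1 (f ++ [k]) ρ = Tstep E M1 k (Tword E M1 f ρ) := by
  unfold Tword
  rw [List.foldl_append]
  rfl

/-- telescoping partial sums -/
lemma partial_sum_eq (E : Fin m → Fin r → Matrix (Fin d) (Fin d) ℂ)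
    (hE : ∀ i, ∑ j, (E i j)ᴴ * E i j = 1)
    (M0 M1 : Matrix (Fin d) (Fin d) ℂ)
    (hM : M0ᴴ * M0 + M1ᴴ * M1 = 1) (s : ℕ → Fin m)
    (ρ : Matrix (Fin d) (Fin d) ℂ) (N : ℕ) :
    ∑ n ∈ Finset.range N, (M0 * Tword E M1 (prefixn s n) ρ * M0ᴴ).trace.re
      = ρ.trace.re - (Tword E M1 (prefixn s N) ρ).trace.re := by
  induction N with
  | zero => simp [prefixn, Tword]
  | succ N ih =>
    rw [Finset.sum_range_succ, ih, prefixn_succ', Tword_concat]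
    have := trace_step E hE M0 M1 hM (s N) (Tword E M1 (prefixn s N) ρ)
    have hre := congrArg Complex.re this
    simp only [Complex.add_re] at hre
    linarith

lemma term_nonneg (E : Fin m → Fin r → Matrix (Fin d) (Fin d) ℂ)
    (M0 M1 : Matrix (Fin d) (Fin d) ℂ) (s : ℕ → Fin m)
    {ρ : Matrix (Fin d) (Fin d) ℂ} (hρ : ρ.PosSemidef) (n : ℕ) :
    0 ≤ (M0 * Tword E M1 (prefixn s n) ρ * M0ᴴ).trace.re :=
  psd_trace_re_nonneg ((Tword_posSemidef E M1 _ hρ).mul_mul_conjTranspose_same M0)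

lemma partial_sum_le (E : Fin m → Fin r → Matrix (Fin d) (Fin d) ℂ)
    (hE : ∀ i, ∑ j, (E i j)ᴴ * E i j = 1)
    (M0 M1 : Matrix (Fin d) (Fin d) ℂ)
    (hM : M0ᴴ * M0 + M1ᴴ * M1 = 1) (s : ℕ → Fin m)
    {ρ : Matrix (Fin d) (Fin d) ℂ} (hρ : ρ.PosSemidef) (N : ℕ) :
    ∑ n ∈ Finset.range N, (M0 * Tword E M1 (prefixn s n) ρ * M0ᴴ).trace.re
      ≤ ρ.trace.re := by
  rw [partial_sum_eq E hE M0 M1 hM]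
  have := psd_trace_re_nonneg (Tword_posSemidef E M1 (prefixn s N) hρ)
  linarith

lemma summable_term (E : Fin m → Fin r → Matrix (Fin d) (Fin d) ℂ)
    (hE : ∀ i, ∑ j, (E i j)ᴴ * E i j = 1)
    (M0 M1 : Matrix (Fin d) (Fin d) ℂ)
    (hM : M0ᴴ * M0 + M1ᴴ * M1 = 1) (s : ℕ → Fin m)
    {ρ : Matrix (Fin d) (Fin d) ℂ} (hρ : ρ.PosSemidef) :
    Summable (fun n => (M0 * Tword E M1 (prefixn s n) ρ * M0ᴴ).trace.re) :=
  summable_of_sum_range_le (term_nonneg E M0 M1 s hρ)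
    (partial_sum_le E hE M0 M1 hM s hρ)

lemma tSched_le (E : Fin m → Fin r → Matrix (Fin d) (Fin d) ℂ)
    (hE : ∀ i, ∑ j, (E i j)ᴴ * E i j = 1)
    (M0 M1 : Matrix (Fin d) (Fin d) ℂ)
    (hM : M0ᴴ * M0 + M1ᴴ * M1 = 1) (s : ℕ → Fin m)
    {ρ : Matrix (Fin d) (Fin d) ℂ} (hρ : ρ.PosSemidef) :
    tSched E M0 M1 s ρ ≤ ρ.trace.re :=
  Summable.tsum_le_of_sum_range_le (summable_term E hE M0 M1 hM s hρ)
    (partial_sum_le E hE M0 M1 hM s hρ)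

lemma tSched_nonneg (E : Fin m → Fin r → Matrix (Fin d) (Fin d) ℂ)
    (M0 M1 : Matrix (Fin d) (Fin d) ℂ) (s : ℕ → Fin m)
    {ρ : Matrix (Fin d) (Fin d) ℂ} (hρ : ρ.PosSemidef) :
    0 ≤ tSched E M0 M1 s ρ :=
  tsum_nonneg (term_nonneg E M0 M1 s hρ)

def consSched (i : Fin m) (s : ℕ → Fin m) : ℕ → Fin m :=
  fun n => Nat.rec i (fun k _ => s k) n

lemma prefixn_consSched (i : Fin m) (s : ℕ → Fin m) (n : ℕ) :
    prefixn (consSched i s) (n + 1) = i :: prefixn s n := by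
  unfold prefixn
  rw [List.ofFn_succ]
  rfl

lemma tSched_cons (E : Fin m → Fin r → Matrix (Fin d) (Fin d) ℂ)
    (hE : ∀ i, ∑ j, (E i j)ᴴ * E i j = 1)
    (M0 M1 : Matrix (Fin d) (Fin d) ℂ)
    (hM : M0ᴴ * M0 + M1ᴴ * M1 = 1) (i : Fin m) (s : ℕ → Fin m)
    {ρ : Matrix (Fin d) (Fin d) ℂ} (hρ : ρ.PosSemidef) :
    tSched E M0 M1 (consSched i s) ρ
      = (M0 * ρ * M0ᴴ).trace.re + tSched E M0 M1 s (Tstep E M1 i ρ) := by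
  unfold tSched
  rw [Summable.tsum_eq_zero_add (summable_term E hE M0 M1 hM _ hρ)]
  have hw : ∀ n, Tword E M1 (prefixn (consSched i s) (n + 1)) ρ
      = Tword E M1 (prefixn s n) (Tstep E M1 i ρ) := by
    intro n; rw [prefixn_consSched]; rfl
  simp only [hw]
  congr 1

/-- `ρ` is terminating iff every reachable state `T_f(ρ)` is terminating. -/
theorem terminating_iff_all_reachable_terminating (d m r : ℕ) (hd : 0 < d) (hm : 0 < m)
    (E : Fin m → Fin r → Matrix (Fin d) (Fin d) ℂ)
    (hE : ∀ i, ∑ j, (E i j)ᴴ * E i j = 1)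
    (M0 M1 : Matrix (Fin d) (Fin d) ℂ)
    (hM : M0ᴴ * M0 + M1ᴴ * M1 = 1)
    (ρ : Matrix (Fin d) (Fin d) ℂ) (hρ : ρ.PosSemidef) (htr : ρ.trace ≤ 1) :
    tInf E M0 M1 ρ = ρ.trace.re ↔
      ∀ f : List (Fin m),
        tInf E M0 M1 (Tword E M1 f ρ) = (Tword E M1 f ρ).trace.re := by
  constructor
  · intro h f
    have key : ∀ (σ : Matrix (Fin d) (Fin d) ℂ), σ.PosSemidef →
        (∀ s, tSched E M0 M1 s σ = σ.trace.re) →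
        ∀ i s, tSched E M0 M1 s (Tstep E M1 i σ) = (Tstep E M1 i σ).trace.re := by
      intro σ hσ hall i s
      have h1 := tSched_cons E hE M0 M1 hM i s hσ
      rw [hall (consSched i s)] at h1
      have h2 := trace_step E hE M0 M1 hM i σ
      have hre := congrArg Complex.re h2
      simp only [Complex.add_re] at hre
      linarith
    have base : ∀ s, tSched E M0 M1 s ρ = ρ.trace.re := by
      intro s
      have hle := tSched_le E hE M0 M1 hM s hρ
      have hge : ρ.trace.re ≤ tSched E M0 M1 s ρ := by
        rw [← h]
        refine ciInf_le ⟨0, ?_⟩ s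
        rintro x ⟨s', rfl⟩
        exact tSched_nonneg E M0 M1 s' hρ
      linarith
    have main : ∀ (f : List (Fin m)) (σ : Matrix (Fin d) (Fin d) ℂ), σ.PosSemidef →
        (∀ s, tSched E M0 M1 s σ = σ.trace.re) →
        (Tword E M1 f σ).PosSemidef ∧
          (∀ s, tSched E M0 M1 s (Tword E M1 f σ) = (Tword E M1 f σ).trace.re) := by
      intro f
      induction f with
      | nil => intro σ hσ hall; exact ⟨hσ, hall⟩
      | cons k g ih =>
        intro σ hσ hall
        exact ih (Tstep E M1 k σ) (Tstep_posSemidef E M1 k hσ) (key σ hσ hall k)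
    obtain ⟨_, hall⟩ := main f ρ hρ base
    have hne : Nonempty (ℕ → Fin m) := ⟨fun _ => ⟨0, hm⟩⟩
    unfold tInf
    simp only [hall]
    exact ciInf_const
  · intro h
    have := h []
    simpa [Tword] using this
end
end

section
/- For every word f over {1,…,m}: (i) PD_f ⊆ H_0 := {x ∈ ℂ^d : M_0 x = 0}; and (ii) for every k ∈ {1,…,m}, letting kf denote the word f with the letter k prepended (so T_{kf} = T_f ∘ T_k), one has PD_{kf} = {x ∈ ℂ^d : M_0 x = 0 and supp(T_k(x x†)) ⊆ PD_f}. -/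
noncomputable section
open Matrix
open scoped ComplexOrder

variable {d m r : ℕ}

/-! ### Auxiliary machinery: Kraus-product expansion of `tWord` -/

section Aux

variable (E : Fin m → Fin r → Matrix (Fin d) (Fin d) ℂ)
  (M0 M1 : Matrix (Fin d) (Fin d) ℂ)

/-- List of all Kraus products for a word. -/
def Klist : List (Fin m) → List (Matrix (Fin d) (Fin d) ℂ)
  | [] => [1]
  | k :: f => (Klist f).flatMap fun K => (List.finRange r).map fun j => K * (E k j * M1)

lemma list_sum_flatMap {α γ : Type*} [AddCommMonoid γ] (l : List α) (g : α → List γ) :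
    (l.flatMap g).sum = (l.map fun a => (g a).sum).sum := by
  induction l with
  | nil => simp
  | cons a t ih => simp [List.flatMap_cons, ih]

lemma Tword_cons' (k : Fin m) (f : List (Fin m)) (ρ : Matrix (Fin d) (Fin d) ℂ) :
    Tword E M1 (k :: f) ρ = Tword E M1 f (Tstep E M1 k ρ) := rfl

lemma Tword_eq : ∀ (f : List (Fin m)) (ρ : Matrix (Fin d) (Fin d) ℂ),
    Tword E M1 f ρ = ((Klist E M1 f).map fun K => K * ρ * Kᴴ).sum
  | [], ρ => by simp [Tword, Klist]
  | k :: f, ρ => by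
    rw [Tword_cons', Tword_eq f, Klist, List.map_flatMap, list_sum_flatMap]
    congr 1
    apply List.map_congr_left
    intro K _
    have : K * Tstep E M1 k ρ * Kᴴ
        = ∑ j, (K * (E k j * M1)) * ρ * (K * (E k j * M1))ᴴ := by
      simp only [Tstep, Finset.mul_sum, Finset.sum_mul]
      apply Finset.sum_congr rfl
      intro j _
      simp only [conjTranspose_mul, Matrix.mul_assoc]
    rw [this, Fin.sum_univ_def, List.map_map]
    rfl

lemma expand_term (ρ : Matrix (Fin d) (Fin d) ℂ) :
    ∀ l : List (Matrix (Fin d) (Fin d) ℂ),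
    (M0 * (l.map fun K => K * ρ * Kᴴ).sum * M0ᴴ).trace.re
      = (l.map fun K => ((M0 * K) * ρ * (M0 * K)ᴴ).trace.re).sum
  | [] => by simp
  | K :: t => by
    simp only [List.map_cons, List.sum_cons, Matrix.mul_add, Matrix.add_mul, trace_add,
      Complex.add_re, expand_term ρ t]
    congr 1
    simp only [conjTranspose_mul, Matrix.mul_assoc]

lemma tWord_eq (f : List (Fin m)) (ρ : Matrix (Fin d) (Fin d) ℂ) :
    tWord E M0 M1 f ρ = ∑ n ∈ Finset.range (f.length + 1),
      ((Klist E M1 (f.take n)).map fun K => ((M0 * K) * ρ * (M0 * K)ᴴ).trace.re).sum := by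
  unfold tWord
  refine Finset.sum_congr rfl fun n _ => ?_
  rw [Tword_eq, expand_term]

lemma trace_mul_conjTranspose_self_re (C : Matrix (Fin d) (Fin d) ℂ) :
    (C * Cᴴ).trace.re = ∑ i, ∑ j, Complex.normSq (C i j) := by
  have : (C * Cᴴ).trace = ∑ i, ∑ j, (Complex.normSq (C i j) : ℂ) := by
    simp [trace, diag, mul_apply, conjTranspose_apply, Complex.star_def, Complex.mul_conj]
  rw [this]
  simp [Complex.re_sum]

section PortSqrt
open scoped MatrixOrder

/-- Square root of a positive semidefinite matrix (port helper). -/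
def Matrix.PosSemidef.sqrt {d : ℕ} {ρ : Matrix (Fin d) (Fin d) ℂ} (_hρ : ρ.PosSemidef) :
    Matrix (Fin d) (Fin d) ℂ :=
  CFC.sqrt ρ

lemma Matrix.PosSemidef.posSemidef_sqrt {d : ℕ} {ρ : Matrix (Fin d) (Fin d) ℂ}
    (hρ : ρ.PosSemidef) : hρ.sqrt.PosSemidef :=
  (CFC.sqrt_nonneg ρ).posSemidef

lemma Matrix.PosSemidef.sqrt_mul_self {d : ℕ} {ρ : Matrix (Fin d) (Fin d) ℂ}
    (hρ : ρ.PosSemidef) : hρ.sqrt * hρ.sqrt = ρ :=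
  CFC.sqrt_mul_sqrt_self ρ hρ.nonneg

end PortSqrt

lemma term_key {ρ : Matrix (Fin d) (Fin d) ℂ} (hρ : ρ.PosSemidef)
    (B : Matrix (Fin d) (Fin d) ℂ) :
    B * ρ * Bᴴ = (B * hρ.sqrt) * (B * hρ.sqrt)ᴴ := by
  rw [conjTranspose_mul, hρ.posSemidef_sqrt.1, ← Matrix.mul_assoc,
    Matrix.mul_assoc B hρ.sqrt hρ.sqrt, hρ.sqrt_mul_self]

lemma term_nonneg_s8 {ρ : Matrix (Fin d) (Fin d) ℂ} (hρ : ρ.PosSemidef)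
    (B : Matrix (Fin d) (Fin d) ℂ) : 0 ≤ (B * ρ * Bᴴ).trace.re := by
  rw [term_key hρ B, trace_mul_conjTranspose_self_re]
  exact Finset.sum_nonneg fun i _ => Finset.sum_nonneg fun j _ => Complex.normSq_nonneg _

lemma term_eq_zero_iff {ρ : Matrix (Fin d) (Fin d) ℂ} (hρ : ρ.PosSemidef)
    (B : Matrix (Fin d) (Fin d) ℂ) :
    (B * ρ * Bᴴ).trace.re = 0 ↔ B * ρ = 0 := by
  constructor
  · intro h
    rw [term_key hρ B, trace_mul_conjTranspose_self_re] at h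
    have h1 := (Finset.sum_eq_zero_iff_of_nonneg fun i _ =>
      Finset.sum_nonneg fun j _ => Complex.normSq_nonneg _).1 h
    have hC : B * hρ.sqrt = 0 := by
      ext i j
      have h2 := (Finset.sum_eq_zero_iff_of_nonneg fun j _ =>
        Complex.normSq_nonneg _).1 (h1 i (Finset.mem_univ i)) j (Finset.mem_univ j)
      simpa using Complex.normSq_eq_zero.1 h2
    calc B * ρ = B * (hρ.sqrt * hρ.sqrt) := by rw [hρ.sqrt_mul_self]
    _ = (B * hρ.sqrt) * hρ.sqrt := by rw [Matrix.mul_assoc]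
    _ = 0 := by rw [hC, Matrix.zero_mul]
  · intro h
    rw [show B * ρ * Bᴴ = (B * ρ) * Bᴴ from rfl, h, Matrix.zero_mul]
    simp

lemma mul_vecMulVec (B : Matrix (Fin d) (Fin d) ℂ) (u v : Fin d → ℂ) :
    B * Matrix.vecMulVec u v = Matrix.vecMulVec (B *ᵥ u) v := by
  ext i j
  simp [mul_apply, vecMulVec_apply, mulVec, dotProduct, Finset.sum_mul, mul_assoc]

lemma vecMulVec_mul (u v : Fin d → ℂ) (C : Matrix (Fin d) (Fin d) ℂ) :
    Matrix.vecMulVec u v * C = Matrix.vecMulVec u (v ᵥ* C) := by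
  ext i j
  simp [mul_apply, vecMulVec_apply, vecMul, dotProduct, Finset.mul_sum, mul_assoc]

lemma posSemidef_outer (x : Fin d → ℂ) : (Matrix.vecMulVec x (star x)).PosSemidef := by
  rw [Matrix.vecMulVec_eq (Fin 1)]
  have : Matrix.replicateRow (Fin 1) (star x) = (Matrix.replicateCol (Fin 1) x)ᴴ := by
    ext i j; simp
  rw [this]
  exact Matrix.posSemidef_self_mul_conjTranspose _

lemma posSemidef_Tstep {ρ : Matrix (Fin d) (Fin d) ℂ} (hρ : ρ.PosSemidef) (k : Fin m) :
    (Tstep E M1 k ρ).PosSemidef := by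
  unfold Tstep
  have : ∀ s : Finset (Fin r), (∑ j ∈ s, (E k j * M1) * ρ * (E k j * M1)ᴴ).PosSemidef := by
    intro s
    induction s using Finset.induction with
    | empty => simpa using Matrix.PosSemidef.zero
    | insert _ _ h ih =>
      rw [Finset.sum_insert h]
      exact (hρ.mul_mul_conjTranspose_same _).add ih
  exact this Finset.univ

lemma tWord_nonneg (f : List (Fin m)) {ρ : Matrix (Fin d) (Fin d) ℂ}
    (hρ : ρ.PosSemidef) : 0 ≤ tWord E M0 M1 f ρ := by
  rw [tWord_eq]
  refine Finset.sum_nonneg fun n _ => List.sum_nonneg fun x hx => ?_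
  obtain ⟨K, _, rfl⟩ := List.mem_map.1 hx
  exact term_nonneg_s8 hρ _

lemma list_sum_eq_zero_mem : ∀ {l : List ℝ}, (∀ x ∈ l, 0 ≤ x) → l.sum = 0 →
    ∀ x ∈ l, x = 0
  | [], _, _, x, hx => by simp at hx
  | a :: t, h0, h, x, hx => by
    have ha : 0 ≤ a := h0 a (by simp)
    have ht : 0 ≤ t.sum := List.sum_nonneg fun y hy => h0 y (by simp [hy])
    rw [List.sum_cons] at h
    have ha0 : a = 0 := by linarith
    have hts : t.sum = 0 := by linarith
    rcases List.mem_cons.1 hx with rfl | hx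
    · exact ha0
    · exact list_sum_eq_zero_mem (fun y hy => h0 y (by simp [hy])) hts x hx

lemma tWord_zero_iff (f : List (Fin m)) {ρ : Matrix (Fin d) (Fin d) ℂ}
    (hρ : ρ.PosSemidef) :
    tWord E M0 M1 f ρ = 0 ↔ ∀ n : ℕ, ∀ K ∈ Klist E M1 (f.take n), (M0 * K) * ρ = 0 := by
  rw [tWord_eq]
  constructor
  · intro h
    have main : ∀ n ∈ Finset.range (f.length + 1),
        ∀ K ∈ Klist E M1 (f.take n), (M0 * K) * ρ = 0 := by
      intro n hn K hK
      have hsum := (Finset.sum_eq_zero_iff_of_nonneg fun n _ =>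
        List.sum_nonneg fun x hx => by
          obtain ⟨K', _, rfl⟩ := List.mem_map.1 hx
          exact term_nonneg_s8 hρ _).1 h n hn
      have hterm := list_sum_eq_zero_mem
        (fun x hx => by
          obtain ⟨K', _, rfl⟩ := List.mem_map.1 hx
          exact term_nonneg_s8 hρ _) hsum
        (((M0 * K) * ρ * (M0 * K)ᴴ).trace.re) (List.mem_map.2 ⟨K, hK, rfl⟩)
      exact (term_eq_zero_iff hρ _).1 hterm
    intro n K hK
    rcases le_or_gt n f.length with hn | hn
    · exact main n (Finset.mem_range.2 (Nat.lt_succ_of_le hn)) K hK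
    · have h1 : f.take n = f.take f.length := by
        rw [List.take_length, List.take_of_length_le hn.le]
      rw [h1] at hK
      exact main f.length (Finset.mem_range.2 (Nat.lt_succ_of_le le_rfl)) K hK
  · intro h
    refine Finset.sum_eq_zero fun n _ => ?_
    refine List.sum_eq_zero fun x hx => ?_
    obtain ⟨K, hK, rfl⟩ := List.mem_map.1 hx
    rw [show (M0 * K) * ρ * (M0 * K)ᴴ = ((M0 * K) * ρ) * (M0 * K)ᴴ from rfl, h n K hK,
      Matrix.zero_mul]
    simp

lemma aux_outer {B : Matrix (Fin d) (Fin d) ℂ} {y : Fin d → ℂ}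
    (h : B * Matrix.vecMulVec y (star y) = 0) : B *ᵥ y = 0 := by
  by_cases hy : y = 0
  · simp [hy]
  · rw [mul_vecMulVec] at h
    obtain ⟨j, hj⟩ := Function.ne_iff.1 hy
    funext i
    have h2 : (B *ᵥ y) i * star (y j) = 0 := by
      have := congrFun (congrFun h i) j
      simpa [vecMulVec_apply] using this
    rcases mul_eq_zero.1 h2 with h3 | h3
    · exact h3
    · exact absurd (star_eq_zero.1 h3) (by simpa using hj)

lemma supp_mem_iff {A : Matrix (Fin d) (Fin d) ℂ} {y : Fin d → ℂ} :
    y ∈ supp A ↔ ∃ z, A *ᵥ z = y := by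
  simp [supp, LinearMap.mem_range, Matrix.toLin'_apply]

lemma tWord_zero_iff_supp (f : List (Fin m)) {σ : Matrix (Fin d) (Fin d) ℂ}
    (hσ : σ.PosSemidef) :
    tWord E M0 M1 f σ = 0 ↔
      ∀ y ∈ supp σ, tWord E M0 M1 f (Matrix.vecMulVec y (star y)) = 0 := by
  constructor
  · intro h y hy
    obtain ⟨z, hz⟩ := supp_mem_iff.1 hy
    rw [tWord_zero_iff E M0 M1 f (posSemidef_outer y)]
    intro n K hK
    have h1 : (M0 * K) * σ = 0 := (tWord_zero_iff E M0 M1 f hσ).1 h n K hK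
    have hy0 : (M0 * K) *ᵥ y = 0 := by
      rw [← hz, Matrix.mulVec_mulVec, h1, Matrix.zero_mulVec]
    rw [mul_vecMulVec, hy0]
    ext i j; simp [vecMulVec_apply]
  · intro h
    rw [tWord_zero_iff E M0 M1 f hσ]
    intro n K hK
    have key : ∀ z, ((M0 * K) * σ) *ᵥ z = 0 := by
      intro z
      have hy : σ *ᵥ z ∈ supp σ := supp_mem_iff.2 ⟨z, rfl⟩
      have h2 := (tWord_zero_iff E M0 M1 f (posSemidef_outer (σ *ᵥ z))).1 (h _ hy) n K hK
      rw [← Matrix.mulVec_mulVec]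
      exact aux_outer h2
    ext i j
    have := congrFun (key (Pi.single j 1)) i
    simpa using this

lemma tWord_cons (k : Fin m) (f : List (Fin m)) (ρ : Matrix (Fin d) (Fin d) ℂ) :
    tWord E M0 M1 (k :: f) ρ
      = (M0 * ρ * M0ᴴ).trace.re + tWord E M0 M1 f (Tstep E M1 k ρ) := by
  unfold tWord
  rw [List.length_cons, Finset.sum_range_succ']
  rw [add_comm]
  congr 1

end Aux

/-- `PD_f ⊆ H₀` and the recursion
`PD_{kf} = H₀ ∩ T_k⁻¹(PD_f)`. -/
theorem PDword_subset_and_recursion (d m r : ℕ) (hd : 0 < d) (hm : 0 < m)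
    (E : Fin m → Fin r → Matrix (Fin d) (Fin d) ℂ)
    (hE : ∀ i, ∑ j, (E i j)ᴴ * E i j = 1)
    (M0 M1 : Matrix (Fin d) (Fin d) ℂ)
    (hM : M0ᴴ * M0 + M1ᴴ * M1 = 1)
    (f : List (Fin m)) :
    (PDword E M0 M1 f ⊆ { x : Fin d → ℂ | M0.mulVec x = 0 }) ∧
    (∀ k : Fin m,
      PDword E M0 M1 (k :: f) =
        { x : Fin d → ℂ | M0.mulVec x = 0 ∧
            (supp (Tstep E M1 k (Matrix.vecMulVec x (star x))) : Set (Fin d → ℂ))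
              ⊆ PDword E M0 M1 f }) := by
  constructor
  · intro x hx
    have h1 := (tWord_zero_iff E M0 M1 f (posSemidef_outer x)).1 hx 0 1 (by simp [Klist])
    rw [Matrix.mul_one] at h1
    exact aux_outer h1
  · intro k
    ext x
    simp only [PDword, Set.mem_setOf_eq]
    rw [tWord_cons]
    set ρ := Matrix.vecMulVec x (star x) with hρdef
    have hρ : ρ.PosSemidef := posSemidef_outer x
    have hσ : (Tstep E M1 k ρ).PosSemidef := posSemidef_Tstep E M1 hρ k
    have h1 : 0 ≤ (M0 * ρ * M0ᴴ).trace.re := term_nonneg_s8 hρ M0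
    have h2 : 0 ≤ tWord E M0 M1 f (Tstep E M1 k ρ) := tWord_nonneg E M0 M1 f hσ
    rw [add_eq_zero_iff_of_nonneg h1 h2]
    apply and_congr
    · rw [term_eq_zero_iff hρ M0]
      constructor
      · intro h; exact aux_outer h
      · intro h
        rw [hρdef, mul_vecMulVec, h]
        ext i j; simp [vecMulVec_apply]
    · rw [tWord_zero_iff_supp E M0 M1 f hσ]
      constructor
      · intro h y hy
        exact h y hy
      · intro h y hy
        exact h hy
end
end
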